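/- Let (e_n) be a basic sequence in a real Banach space X, let R be ℤ or ℚ, and let E be a metric space. The relation < is ill-founded on Lip(R,(e_n),E) if and only if there is an infinite subsequence e_{n₁}, e_{n₂}, e_{n₃}, … such that R[e_{n₁},e_{n₂},…] (the set of finite R-linear combinations of the e_{n_k}, with the norm-induced metric) bi-Lipschitz embeds into E. -/

import Mathlib

open Filter Set Topology
open scoped ENNReal

noncomputable section

/-! ### Metric notions of embeddability -/

/-- A coarse embedding between (pseudo)metric spaces. -/
def CoarseEmbeddingMap {X E : Type*} [PseudoMetricSpace X] [PseudoMetricSpace E]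
    (f : X → E) : Prop :=
  ∃ κ ω : ℝ → ℝ,
    MonotoneOn κ (Set.Ici 0) ∧ MonotoneOn ω (Set.Ici 0) ∧
    (∀ t : ℝ, 0 ≤ t → 0 ≤ κ t ∧ 0 ≤ ω t) ∧
    Filter.Tendsto κ Filter.atTop Filter.atTop ∧
    ∀ x y : X, κ (dist x y) ≤ dist (f x) (f y) ∧ dist (f x) (f y) ≤ ω (dist x y)

/-- A uniform embedding between (pseudo)metric spaces. -/
def UniformEmbeddingMapNL {X E : Type*} [PseudoMetricSpace X] [PseudoMetricSpace E]
    (f : X → E) : Prop :=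
  ∃ κ ω : ℝ → ℝ,
    MonotoneOn κ (Set.Ici 0) ∧ MonotoneOn ω (Set.Ici 0) ∧
    (∀ t : ℝ, 0 ≤ t → 0 ≤ κ t ∧ 0 ≤ ω t) ∧
    (∀ t : ℝ, 0 < t → 0 < κ t) ∧
    Filter.Tendsto ω (nhdsWithin 0 (Set.Ioi 0)) (nhds 0) ∧
    ∀ x y : X, κ (dist x y) ≤ dist (f x) (f y) ∧ dist (f x) (f y) ≤ ω (dist x y)

/-- A bi-Lipschitz embedding between (pseudo)metric spaces. -/
def BiLipschitzEmbeddingMap {X E : Type*} [PseudoMetricSpace X] [PseudoMetricSpace E]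
    (f : X → E) : Prop :=
  ∃ c C : ℝ, 0 < c ∧ c ≤ C ∧
    ∀ x y : X, c * dist x y ≤ dist (f x) (f y) ∧ dist (f x) (f y) ≤ C * dist x y

/-! ### The set `𝒵`, functional moduli and the classes `M_coarse`, `M_uniform`, `M_Lipschitz` -/

/-- The set `𝒵 = {…,1/3,1/2,1,2,3,…} ⊆ (0,∞)`. -/
def Zset : Set ℝ := {r | ∃ n : ℕ, 1 ≤ n ∧ (r = n ∨ r = 1 / n)}

/-- Membership in `𝒩`: a non-decreasing `[0,∞]`-valued modulus on `𝒵` (values outside of `𝒵`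
are irrelevant dummy values). -/
def Nmod (κ : ℝ → ℝ≥0∞) : Prop := MonotoneOn κ Zset

/-- `t₋`: the largest element of `𝒵` below a real `t > 0`. -/
def tminus (t : ℝ) : ℝ := if 1 ≤ t then (⌊t⌋ : ℝ) else 1 / (⌈1 / t⌉ : ℝ)

/-- `t₊`: the smallest element of `𝒵` above a real `t > 0`. -/
def tplus (t : ℝ) : ℝ := if 1 ≤ t then (⌈t⌉ : ℝ) else 1 / (⌊1 / t⌋ : ℝ)

/-- The pair `(κ, ω)` belongs to `M_coarse`. -/
def Mcoarse (κ ω : ℝ → ℝ≥0∞) : Prop :=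
  (∀ r ∈ Zset, ω r < ⊤) ∧ Filter.Tendsto (fun n : ℕ => κ n) Filter.atTop (nhds ⊤)

/-- The pair `(κ, ω)` belongs to `M_uniform`. -/
def Muniform (κ ω : ℝ → ℝ≥0∞) : Prop :=
  (∀ r ∈ Zset, 0 < κ r) ∧
    Filter.Tendsto (fun n : ℕ => ω (1 / (n + 1 : ℝ))) Filter.atTop (nhds 0)

/-- The pair `(κ, ω)` belongs to `M_Lipschitz`. -/
def MLipschitz (κ ω : ℝ → ℝ≥0∞) : Prop :=
  ∃ c C : ℝ, 0 < c ∧ c < C ∧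
    ∀ r ∈ Zset, ENNReal.ofReal (c * r) ≤ κ r ∧ ω r ≤ ENNReal.ofReal (C * r)

/-! ### Ill-foundedness and ranks of binary relations restricted to subsets -/

/-- The relation `r` is ill-founded on the subset `S`. -/
def IllFoundedOn {A : Type*} (r : A → A → Prop) (S : Set A) : Prop :=
  ∃ a : ℕ → A, (∀ n, a n ∈ S) ∧ ∀ n, r (a (n + 1)) (a n)

/-- The rank `rk(S, r)` of a relation `r`, well-founded on a subset `S`. -/
def relRankOn {A : Type*} (r : A → A → Prop) (S : Set A)
    (h : WellFounded fun a b : S => r a b) : Ordinal :=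
  ⨆ a : S, Order.succ (h.apply a).rank

/-! ### The simple embeddability ranks -/

/-- A quadruple `(κ, ω, k, φ)` as in the definition of `Ω(D,E)`; the countable dense set `D` is
given by an enumeration `x : ℕ → X` and `φ : D → E` is represented by the map on indices. -/
structure Quad (E : Type*) where
  kappa : ℝ → ℝ≥0∞
  omega : ℝ → ℝ≥0∞
  k : ℕ
  phi : ℕ → E

/-- The set `Ω(D,E)` where `D` is enumerated by `x : ℕ → X`. -/
def OmegaSet {X E : Type*} [MetricSpace X] [MetricSpace E] (x : ℕ → X) : Set (Quad E) :=
  {q | Nmod q.kappa ∧ Nmod q.omega ∧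
    (∀ i j : ℕ, x i = x j → q.phi i = q.phi j) ∧
    ∀ i < q.k, ∀ j < q.k, x i ≠ x j →
      q.kappa (tminus (dist (x i) (x j))) ≤ edist (q.phi i) (q.phi j) ∧
      edist (q.phi i) (q.phi j) ≤ q.omega (tplus (dist (x i) (x j)))}

/-- The set `Coa(D,E)`. -/
def CoaSet {X E : Type*} [MetricSpace X] [MetricSpace E] (x : ℕ → X) : Set (Quad E) :=
  {q ∈ OmegaSet x | Mcoarse q.kappa q.omega}

/-- The set `Uni(D,E)`. -/
def UniSet {X E : Type*} [MetricSpace X] [MetricSpace E] (x : ℕ → X) : Set (Quad E) :=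
  {q ∈ OmegaSet x | Muniform q.kappa q.omega}

/-- The set `Lip(D,E)`. -/
def LipSet {X E : Type*} [MetricSpace X] [MetricSpace E] (x : ℕ → X) : Set (Quad E) :=
  {q ∈ OmegaSet x | MLipschitz q.kappa q.omega}

/-- The relation `<` on `Ω(D,E)`. -/
def QuadRel {E : Type*} (p q : Quad E) : Prop :=
  p.kappa = q.kappa ∧ p.omega = q.omega ∧ p.k = q.k + 1 ∧ ∀ i < q.k, p.phi i = q.phi i

/-! ### Embeddability ranks based on Schauder bases -/

/-- The copy of `ℤ` inside `ℝ`. -/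
def ZR : Set ℝ := Set.range ((↑) : ℤ → ℝ)

/-- The copy of `ℚ` inside `ℝ`. -/
def QR : Set ℝ := Set.range ((↑) : ℚ → ℝ)

/-- `R[A]`: the set of `R`-linear combinations of the vectors `e i`, `i ∈ A`. -/
def RComb {X : Type*} [NormedAddCommGroup X] [Module ℝ X] (R : Set ℝ) (e : ℕ → X)
    (A : Finset ℕ) : Set X :=
  {x | ∃ c : ℕ → ℝ, (∀ i, c i ∈ R) ∧ x = ∑ i ∈ A, c i • e i}

/-- `R[e₁,e₂,…]`: the set of all finite `R`-linear combinations of the vectors `e i`. -/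
def RCombAll {X : Type*} [NormedAddCommGroup X] [Module ℝ X] (R : Set ℝ) (e : ℕ → X) : Set X :=
  ⋃ A : Finset ℕ, RComb R e A

/-- `A ≺* B` for finite subsets of `ℕ`: `A` is obtained from `B` by adding one element larger
than all elements of `B`. -/
def PrecStar (A B : Finset ℕ) : Prop := ∃ m : ℕ, (∀ b ∈ B, b < m) ∧ A = insert m B

/-- A quadruple `(κ, ω, A, φ)` as in the definition of `Θ(R,(eₙ),E)`; the finite subset `A` of
`{e₁,e₂,…}` is recorded by the finite set of indices, and `φ` (a map on `R[e₁,e₂,…]`) is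
represented by a map on `X` (only its values on `R`-linear combinations are ever relevant). -/
structure QuadF (X E : Type*) where
  kappa : ℝ → ℝ≥0∞
  omega : ℝ → ℝ≥0∞
  A : Finset ℕ
  phi : X → E

/-- The set `Θ(R,(eₙ),E)`. -/
def ThetaSet {X E : Type*} [NormedAddCommGroup X] [Module ℝ X] [MetricSpace E]
    (R : Set ℝ) (e : ℕ → X) : Set (QuadF X E) :=
  {q | Nmod q.kappa ∧ Nmod q.omega ∧
    ∀ x ∈ RComb R e q.A, ∀ y ∈ RComb R e q.A, x ≠ y →
      q.kappa (tminus (dist x y)) ≤ edist (q.phi x) (q.phi y) ∧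
      edist (q.phi x) (q.phi y) ≤ q.omega (tplus (dist x y))}

/-- The set `Coa(R,(eₙ),E)`. -/
def CoaTheta {X E : Type*} [NormedAddCommGroup X] [Module ℝ X] [MetricSpace E]
    (R : Set ℝ) (e : ℕ → X) : Set (QuadF X E) :=
  {q ∈ ThetaSet R e | Mcoarse q.kappa q.omega}

/-- The set `Uni(R,(eₙ),E)`. -/
def UniTheta {X E : Type*} [NormedAddCommGroup X] [Module ℝ X] [MetricSpace E]
    (R : Set ℝ) (e : ℕ → X) : Set (QuadF X E) :=
  {q ∈ ThetaSet R e | Muniform q.kappa q.omega}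

/-- The set `Lip(R,(eₙ),E)`. -/
def LipTheta {X E : Type*} [NormedAddCommGroup X] [Module ℝ X] [MetricSpace E]
    (R : Set ℝ) (e : ℕ → X) : Set (QuadF X E) :=
  {q ∈ ThetaSet R e | MLipschitz q.kappa q.omega}

/-- The relation `<` on `Θ(R,(eₙ),E)`. -/
def QuadFRel {X E : Type*} [NormedAddCommGroup X] [Module ℝ X]
    (R : Set ℝ) (e : ℕ → X) (p q : QuadF X E) : Prop :=
  p.kappa = q.kappa ∧ p.omega = q.omega ∧ PrecStar p.A q.A ∧
    ∀ x ∈ RComb R e q.A, p.phi x = q.phi x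

/-! ### Schauder bases, basic sequences, subsymmetric bases -/

/-- `(eₙ)` is a Schauder basis of the subset `S`: every element of `S` has a unique
norm-convergent expansion. -/
def IsSchauderBasisOf {X : Type*} [NormedAddCommGroup X] [Module ℝ X] (e : ℕ → X)
    (S : Set X) : Prop :=
  ∀ x ∈ S, ∃! a : ℕ → ℝ,
    Filter.Tendsto (fun N => ∑ i ∈ Finset.range N, a i • e i) Filter.atTop (nhds x)

/-- `(eₙ)` is a Schauder basis of the whole space `X`. -/
def IsSchauderBasis {X : Type*} [NormedAddCommGroup X] [Module ℝ X] (e : ℕ → X) : Prop :=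
  IsSchauderBasisOf e Set.univ

/-- `(eₙ)` is a basic sequence: it is a Schauder basis of its closed linear span. -/
def IsBasicSequence {X : Type*} [NormedAddCommGroup X] [Module ℝ X] (e : ℕ → X) : Prop :=
  IsSchauderBasisOf e (closure (Submodule.span ℝ (Set.range e) : Set X))

/-- `(eₙ)` is a subsymmetric basic sequence. -/
def IsSubsymmetric {X : Type*} [NormedAddCommGroup X] [Module ℝ X] (e : ℕ → X) : Prop :=
  IsBasicSequence e ∧ ∃ C : ℝ, 1 ≤ C ∧ ∀ n : ℕ → ℕ, StrictMono n →
    ∀ s : Finset ℕ, ∀ a : ℕ → ℝ,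
      C⁻¹ * ‖∑ k ∈ s, a k • e k‖ ≤ ‖∑ k ∈ s, a k • e (n k)‖ ∧
      ‖∑ k ∈ s, a k • e (n k)‖ ≤ C * ‖∑ k ∈ s, a k • e k‖

/-! ### Schreier families -/

/-- `n ≤ A`: either `A = ∅` or `n ≤ min A`. -/
def natLE (n : ℕ) (A : Finset ℕ) : Prop := ∀ a ∈ A, n ≤ a

/-- `A < B`: either one is empty or `max A < min B`. -/
def finLT (A B : Finset ℕ) : Prop := ∀ a ∈ A, ∀ b ∈ B, a < b

/-- The Schreier families `S_α`, relative to a fixed assignment `lseq` of fundamental sequences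
to (countable) limit ordinals; here `lseq l n` denotes `λ_{n+1}` in 1-based notation. -/
def Schreier (lseq : Ordinal → ℕ → Ordinal) (α : Ordinal) : Set (Finset ℕ) :=
  Ordinal.limitRecOn α
    ({A | ∃ n : ℕ, 1 ≤ n ∧ A = {n}} ∪ {∅})
    (fun _ S => {A | ∃ n : ℕ, 1 ≤ n ∧ ∃ f : ℕ → Finset ℕ,
      (∀ i < n, f i ∈ S) ∧ natLE n (f 0) ∧
      (∀ i j : ℕ, i < j → j < n → finLT (f i) (f j)) ∧
      A = (Finset.range n).biUnion f})
    (fun o _ ih => {A | ∃ n : ℕ, natLE (n + 1) A ∧ ∃ h : lseq o n < o, A ∈ ih (lseq o n) h})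

/-- `lseq` is a legitimate assignment of fundamental sequences: to every countable limit
ordinal `l` it assigns a strictly increasing sequence of smaller ordinals with supremum `l`. -/
def IsFundSeq (lseq : Ordinal → ℕ → Ordinal) : Prop :=
  ∀ l : Ordinal, Order.IsSuccLimit l → l < (Cardinal.aleph 1).ord →
    StrictMono (lseq l) ∧ (∀ n, lseq l n < l) ∧ (⨆ n, lseq l n) = l

/-! ### The space `c₀` and `Z[S_α]_{c₀}` -/

/-- The Banach space `c₀` of real sequences vanishing at infinity, with the sup norm. -/
abbrev c0 : Type := ZeroAtInftyContinuousMap ℕ ℝ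

/-- The standard unit vector basis of `c₀`. -/
def stdBasis (n : ℕ) : c0 :=
  { toFun := fun m => if m = n then (1 : ℝ) else 0
    continuous_toFun := continuous_of_discreteTopology
    zero_at_infty' := by
      refine Filter.Tendsto.mono_left ?_ Filter.cocompact_le_cofinite
      refine tendsto_nhds_of_eventually_eq ?_
      refine Filter.eventually_cofinite.mpr (Set.Finite.subset (Set.finite_singleton n) ?_)
      intro m hm
      by_contra h
      exact hm (if_neg h) }

/-- The metric space `Z[S_α]_{c₀}` (as a subset of `c₀`). -/
def ZSchreierSet (lseq : Ordinal → ℕ → Ordinal) (α : Ordinal) : Set c0 :=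
  {x | ∃ A ∈ Schreier lseq α, ∃ t : ℕ → ℤ, x = ∑ i ∈ A, (t i : ℝ) • stdBasis i}

/-! ### Eventual domination -/

/-- The family `F ⊆ ℕ^ℕ` is bounded with respect to eventual domination. -/
def EvDomBounded (F : Set (ℕ → ℕ)) : Prop :=
  ∃ g : ℕ → ℕ, ∀ f ∈ F, ∀ᶠ m in Filter.atTop, f m < g m

end


section Helpers
lemma zset_pos {r : ℝ} (hr : r ∈ Zset) : 0 < r := by
  obtain ⟨n, hn, h | h⟩ := hr
  · rw [h]; exact_mod_cast Nat.lt_of_lt_of_le Nat.zero_lt_one hn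
  · rw [h]; exact one_div_pos.mpr (by exact_mod_cast Nat.lt_of_lt_of_le Nat.zero_lt_one hn)

lemma int_mem_zset {z : ℤ} (hz : 1 ≤ z) : (z : ℝ) ∈ Zset := by
  refine ⟨z.toNat, by omega, Or.inl ?_⟩
  exact_mod_cast (Int.toNat_of_nonneg (by omega : (0:ℤ) ≤ z)).symm

lemma inv_int_mem_zset {z : ℤ} (hz : 1 ≤ z) : (1 / (z : ℝ)) ∈ Zset := by
  refine ⟨z.toNat, by omega, Or.inr ?_⟩
  have : ((z.toNat : ℕ) : ℝ) = (z : ℝ) := by exact_mod_cast Int.toNat_of_nonneg (by omega : (0:ℤ) ≤ z)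
  rw [this]

lemma tminus_spec {t : ℝ} (ht : 0 < t) :
    tminus t ∈ Zset ∧ t / 2 ≤ tminus t ∧ tminus t ≤ t := by
  unfold tminus
  split_ifs with h
  · have h1 : (1:ℤ) ≤ ⌊t⌋ := Int.le_floor.mpr (by exact_mod_cast h)
    have hfl : (⌊t⌋:ℝ) ≤ t := Int.floor_le t
    have hgt : t - 1 < (⌊t⌋:ℝ) := Int.sub_one_lt_floor t
    refine ⟨int_mem_zset h1, ?_, hfl⟩
    rcases le_or_gt t 2 with h2 | h2
    · have : (1:ℝ) ≤ (⌊t⌋:ℝ) := by exact_mod_cast h1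
      linarith
    · linarith
  · push_neg at h
    have hs1 : 1 ≤ 1 / t := one_le_one_div ht h.le
    have hspos : 0 < 1 / t := by linarith
    have h1 : (1:ℤ) ≤ ⌈1/t⌉ := Int.le_ceil_iff.mpr (by norm_num; linarith)
    have hcpos : (0:ℝ) < (⌈1/t⌉:ℝ) := by exact_mod_cast h1
    have hle : 1/t ≤ (⌈1/t⌉:ℝ) := Int.le_ceil _
    have hlt : (⌈1/t⌉:ℝ) < 1/t + 1 := Int.ceil_lt_add_one _
    refine ⟨inv_int_mem_zset h1, ?_, ?_⟩
    · rw [div_le_div_iff₀ (by norm_num) hcpos]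
      have : 1/t + 1 ≤ 2 * (1/t) := by linarith
      have h2 : (⌈1/t⌉:ℝ) ≤ 2 / t := by rw [show (2:ℝ)/t = 2*(1/t) by ring]; linarith
      calc t * (⌈1/t⌉:ℝ) ≤ t * (2/t) := by nlinarith
        _ = 1 * 2 := by field_simp
    · rw [div_le_iff₀ hcpos]
      calc 1 = t * (1/t) := by field_simp
        _ ≤ t * (⌈1/t⌉:ℝ) := by nlinarith

lemma tplus_spec {t : ℝ} (ht : 0 < t) :
    tplus t ∈ Zset ∧ t ≤ tplus t ∧ tplus t ≤ 2 * t := by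
  unfold tplus
  split_ifs with h
  · have h1 : (1:ℤ) ≤ ⌈t⌉ := Int.le_ceil_iff.mpr (by norm_num; linarith)
    have hle : t ≤ (⌈t⌉:ℝ) := Int.le_ceil _
    have hlt : (⌈t⌉:ℝ) < t + 1 := Int.ceil_lt_add_one _
    exact ⟨int_mem_zset h1, hle, by linarith⟩
  · push_neg at h
    have hs1 : 1 ≤ 1 / t := one_le_one_div ht h.le
    have h1 : (1:ℤ) ≤ ⌊1/t⌋ := Int.le_floor.mpr (by exact_mod_cast hs1)
    have hfpos : (0:ℝ) < (⌊1/t⌋:ℝ) := by exact_mod_cast h1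
    have hfle : (⌊1/t⌋:ℝ) ≤ 1/t := Int.floor_le _
    have hgt : 1/t - 1 < (⌊1/t⌋:ℝ) := Int.sub_one_lt_floor _
    have hf1 : (1:ℝ) ≤ (⌊1/t⌋:ℝ) := by exact_mod_cast h1
    refine ⟨inv_int_mem_zset h1, ?_, ?_⟩
    · rw [le_div_iff₀ hfpos]
      calc t * (⌊1/t⌋:ℝ) ≤ t * (1/t) := by nlinarith
        _ = 1 := by field_simp
    · rw [div_le_iff₀ hfpos]
      have hhalf : 1/(2*t) ≤ (⌊1/t⌋:ℝ) := by
        rcases le_or_gt (1/t) 2 with h2 | h2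
        · have : 1/(2*t) = (1/t)/2 := by ring
          linarith [this ▸ (by linarith : (1/t)/2 ≤ 1)]
        · have : 1/(2*t) = (1/t)/2 := by ring
          rw [this]; linarith
      calc 1 = 2 * t * (1/(2*t)) := by field_simp
        _ ≤ 2 * t * (⌊1/t⌋:ℝ) := by nlinarith


lemma RComb_mono {X : Type*} [NormedAddCommGroup X] [Module ℝ X] {R : Set ℝ} (h0 : (0:ℝ) ∈ R)
    (e : ℕ → X) {A B : Finset ℕ} (hAB : A ⊆ B) : RComb R e A ⊆ RComb R e B := by
  rintro x ⟨c, hc, rfl⟩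
  refine ⟨fun i => if i ∈ A then c i else 0, fun i => ?_, ?_⟩
  · by_cases h : i ∈ A <;> simp [h, hc i, h0]
  · rw [← Finset.sum_subset hAB (fun i _ hiA => by simp [hiA])]
    exact (Finset.sum_congr rfl fun i hi => by simp [hi]).symm

lemma RComb_image {X : Type*} [NormedAddCommGroup X] [Module ℝ X] {R : Set ℝ} (h0 : (0:ℝ) ∈ R)
    (e : ℕ → X) {m : ℕ → ℕ} (hm : Function.Injective m) (B : Finset ℕ) :
    RComb R (fun j => e (m j)) B = RComb R e (B.image m) := by
  ext x
  constructor
  · rintro ⟨c, hc, rfl⟩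
    refine ⟨fun i => if i ∈ B.image m then c (Function.invFun m i) else 0, fun i => ?_, ?_⟩
    · by_cases h : i ∈ B.image m <;> simp [h, hc _, h0]
    · rw [Finset.sum_image (fun a _ b _ h => hm h)]
      refine Finset.sum_congr rfl fun j hj => ?_
      have hmem : m j ∈ B.image m := Finset.mem_image_of_mem m hj
      simp only [if_pos hmem, Function.leftInverse_invFun hm j]
  · rintro ⟨c, hc, rfl⟩
    exact ⟨fun j => c (m j), fun j => hc _, by
      rw [Finset.sum_image (fun a _ b _ h => hm h)]⟩

end Helpers

theorem stmt12 {X E : Type*} [NormedAddCommGroup X] [NormedSpace ℝ X] [CompleteSpace X]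
    [MetricSpace E] (e : ℕ → X) (he : IsBasicSequence e)
    (R : Set ℝ) (hR : R = ZR ∨ R = QR) :
    IllFoundedOn (QuadFRel (E := E) R e) (LipTheta (E := E) R e) ↔
      ∃ n : ℕ → ℕ, StrictMono n ∧
        ∃ f : ↥(RCombAll R fun k => e (n k)) → E, BiLipschitzEmbeddingMap f := by
  have h0R : (0:ℝ) ∈ R := by
    rcases hR with h | h <;> subst h
    · exact ⟨(0:ℤ), by norm_num⟩
    · exact ⟨(0:ℚ), by norm_num⟩
  constructor
  · rintro ⟨a, haS, hch⟩
    have hκc : ∀ k, (a k).kappa = (a 0).kappa := by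
      intro k; induction k with
      | zero => rfl
      | succ k ih => rw [(hch k).1, ih]
    have hωc : ∀ k, (a k).omega = (a 0).omega := by
      intro k; induction k with
      | zero => rfl
      | succ k ih => rw [(hch k).2.1, ih]
    have hstep : ∀ k, ∃ mm, (∀ b ∈ (a k).A, b < mm) ∧ (a (k+1)).A = insert mm (a k).A :=
      fun k => (hch k).2.2.1
    choose m hmlt hmA using hstep
    have hmem : ∀ k, m k ∈ (a (k+1)).A := fun k => by
      rw [hmA k]; exact Finset.mem_insert_self _ _
    have hmono : StrictMono m := strictMono_nat_of_lt_succ fun k => hmlt (k+1) (m k) (hmem k)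
    have hAmono : ∀ k k', k ≤ k' → (a k).A ⊆ (a k').A := by
      intro k k' h
      induction h with
      | refl => exact subset_rfl
      | @step k' h ih => rw [hmA k']; exact ih.trans (Finset.subset_insert _ _)
    have hphic : ∀ k k', k ≤ k' → ∀ x ∈ RComb R e ((a k).A), (a k').phi x = (a k).phi x := by
      intro k k' h
      induction h with
      | refl => intro x _; rfl
      | @step k' h ih =>
          intro x hx
          rw [(hch k').2.2.2 x (RComb_mono h0R e (hAmono _ _ h) hx), ih x hx]
    have hmemS : ∀ x ∈ RCombAll R (fun j => e (m j)), ∃ K, x ∈ RComb R e ((a K).A) := by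
      intro x hx
      obtain ⟨B, hB⟩ := Set.mem_iUnion.mp hx
      refine ⟨B.sup id + 1, ?_⟩
      rw [RComb_image h0R e hmono.injective] at hB
      refine RComb_mono h0R e ?_ hB
      intro i hi
      obtain ⟨j, hj, rfl⟩ := Finset.mem_image.mp hi
      have hj' : j + 1 ≤ B.sup id + 1 := by
        have := Finset.le_sup (f := id) hj; simp only [id] at this; omega
      exact hAmono _ _ hj' (hmem j)
    obtain ⟨c, C, hc, hcC, hML⟩ := (haS 0).2
    refine ⟨m, hmono, ?_⟩
    have hex : ∀ x : ↥(RCombAll R fun k => e (m k)), ∃ K, (x : X) ∈ RComb R e ((a K).A) :=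
      fun x => hmemS x x.2
    refine ⟨fun x => (a (hex x).choose).phi ↑x, c/2, 2*C, by linarith, by nlinarith, ?_⟩
    have hval : ∀ (x : ↥(RCombAll R fun k => e (m k))) (K : ℕ),
        (x:X) ∈ RComb R e ((a K).A) → (a (hex x).choose).phi ↑x = (a K).phi ↑x := by
      intro x K hK
      have h0 := (hex x).choose_spec
      calc (a (hex x).choose).phi ↑x = (a (max (hex x).choose K)).phi ↑x :=
            (hphic _ _ (le_max_left _ _) _ h0).symm
        _ = (a K).phi ↑x := hphic K _ (le_max_right _ _) _ hK
    intro x y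
    rcases eq_or_ne x y with rfl | hxy
    · simp
    · dsimp only
      obtain ⟨Kx, hKx⟩ := hex x
      obtain ⟨Ky, hKy⟩ := hex y
      have hx' : (x:X) ∈ RComb R e ((a (max Kx Ky)).A) :=
        RComb_mono h0R e (hAmono _ _ (le_max_left _ _)) hKx
      have hy' : (y:X) ∈ RComb R e ((a (max Kx Ky)).A) :=
        RComb_mono h0R e (hAmono _ _ (le_max_right _ _)) hKy
      have hne : (x:X) ≠ (y:X) := Subtype.coe_injective.ne hxy
      have ht : 0 < dist (x:X) (y:X) := dist_pos.mpr hne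
      obtain ⟨hzm, hm1, hm2⟩ := tminus_spec ht
      obtain ⟨hzp, hp1, hp2⟩ := tplus_spec ht
      have hTh := ((haS (max Kx Ky)).1).2.2 (x:X) hx' (y:X) hy' hne
      rw [hκc (max Kx Ky), hωc (max Kx Ky)] at hTh
      obtain ⟨hlo, hhi⟩ := hTh
      rw [hval x _ hx', hval y _ hy', Subtype.dist_eq]
      have h1 : ENNReal.ofReal (c * tminus (dist (x:X) (y:X))) ≤
          edist ((a (max Kx Ky)).phi ↑x) ((a (max Kx Ky)).phi ↑y) :=
        le_trans (hML _ hzm).1 hlo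
      have h2 : edist ((a (max Kx Ky)).phi ↑x) ((a (max Kx Ky)).phi ↑y) ≤
          ENNReal.ofReal (C * tplus (dist (x:X) (y:X))) :=
        le_trans hhi (hML _ hzp).2
      rw [edist_dist] at h1 h2
      have h1' : c * tminus (dist (x:X) (y:X)) ≤
          dist ((a (max Kx Ky)).phi ↑x) ((a (max Kx Ky)).phi ↑y) :=
        (ENNReal.ofReal_le_ofReal_iff dist_nonneg).mp h1
      have h2' : dist ((a (max Kx Ky)).phi ↑x) ((a (max Kx Ky)).phi ↑y) ≤
          C * tplus (dist (x:X) (y:X)) := by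
        have hCp : 0 ≤ C * tplus (dist (x:X) (y:X)) := by nlinarith
        exact (ENNReal.ofReal_le_ofReal_iff hCp).mp h2
      constructor
      · nlinarith
      · nlinarith
  · rintro ⟨n, hn, f, c, C, hc, hcC, hf⟩
    classical
    have h0S : (0:X) ∈ RCombAll R (fun k => e (n k)) :=
      Set.mem_iUnion.mpr ⟨∅, fun _ => (0:ℝ), fun _ => h0R, by simp⟩
    set φ : X → E := fun x =>
      if h : x ∈ RCombAll R (fun k => e (n k)) then f ⟨x, h⟩ else f ⟨0, h0S⟩ with hφ
    have hsub : ∀ k : ℕ, RComb R e ((Finset.range (k+1)).image n) ⊆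
        RCombAll R (fun k => e (n k)) := by
      intro k
      rw [← RComb_image h0R e hn.injective]
      exact Set.subset_iUnion (fun B => RComb R (fun j => e (n j)) B) (Finset.range (k+1))
    refine ⟨fun k => ⟨fun r => ENNReal.ofReal (c * r), fun r => ENNReal.ofReal (C * r),
      (Finset.range (k+1)).image n, φ⟩, fun k => ⟨⟨?_, ?_, ?_⟩, c, C+1, hc, by linarith,
      fun r hr => ⟨le_refl _, ENNReal.ofReal_le_ofReal (by nlinarith [zset_pos hr])⟩⟩,
      fun k => ⟨rfl, rfl, ⟨n (k+1), ?_, ?_⟩, fun x _ => rfl⟩⟩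
    · intro u _ v _ huv
      exact ENNReal.ofReal_le_ofReal (mul_le_mul_of_nonneg_left huv hc.le)
    · intro u _ v _ huv
      exact ENNReal.ofReal_le_ofReal (mul_le_mul_of_nonneg_left huv (by linarith))
    · intro x hx y hy hxy
      have hxS := hsub k hx
      have hyS := hsub k hy
      have hφx : φ x = f ⟨x, hxS⟩ := dif_pos hxS
      have hφy : φ y = f ⟨y, hyS⟩ := dif_pos hyS
      have ht : 0 < dist x y := dist_pos.mpr hxy
      obtain ⟨hzm, hm1, hm2⟩ := tminus_spec ht
      obtain ⟨hzp, hp1, hp2⟩ := tplus_spec ht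
      have hd : dist (⟨x, hxS⟩ : ↥(RCombAll R (fun k => e (n k)))) ⟨y, hyS⟩ = dist x y :=
        Subtype.dist_eq _ _
      obtain ⟨hf1, hf2⟩ := hf ⟨x, hxS⟩ ⟨y, hyS⟩
      rw [hd] at hf1 hf2
      simp only [hφx, hφy, edist_dist]
      constructor
      · exact ENNReal.ofReal_le_ofReal (by nlinarith)
      · exact ENNReal.ofReal_le_ofReal (by nlinarith)
    · intro b hb
      obtain ⟨j, hj, rfl⟩ := Finset.mem_image.mp hb
      exact hn (Finset.mem_range.mp hj)
    · show (Finset.range (k+2)).image n = insert (n (k+1)) ((Finset.range (k+1)).image n)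
      rw [Finset.range_add_one, Finset.image_insert]
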